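/- Let (X,Σ) and (X',Σ') be stratified samples of ℝ^N with Σ and Σ' nonempty, and let δ > 0 satisfy d_H(X,X') < δ and d_H(Σ,Σ') < δ. Write s := s_Σ and s' := s_{Σ'} for the induced strong stratifications. Then for all real numbers 0 ≤ v' ≤ v ≤ 1: {y ∈ X' : v' ≤ s'(y) ≤ v} is contained in the closed 2δ-thickening of {x ∈ X : v'−2δ ≤ s(x) ≤ v+2δ}, and {x ∈ X : v' ≤ s(x) ≤ v} is contained in the closed 2δ-thickening of {y ∈ X' : v'−2δ ≤ s'(y) ≤ v+2δ}. (This is the concrete content of the statement that the parameter-free persistent stratified homotopy type ε_pers is 2-Lipschitz with respect to the stratified Hausdorff distance and the flow interleaving distance.) -/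

import Mathlib

open Metric Set
open scoped ENNReal

/-- The induced strong stratification of a stratified sample `(X, Σ)`:
`s_Σ(x) := min (dist x Σ) 1`. -/
noncomputable def inducedStrat {N : ℕ} (Sg : Set (EuclideanSpace ℝ (Fin N)))
    (x : EuclideanSpace ℝ (Fin N)) : ℝ :=
  min (Metric.infDist x Sg) 1

lemma strat_close {N : ℕ} {Sg Sg' : Set (EuclideanSpace ℝ (Fin N))}
    {δ : ℝ} (hδ : 0 < δ)
    (hS : EMetric.hausdorffEdist Sg Sg' < ENNReal.ofReal δ)
    {x y : EuclideanSpace ℝ (Fin N)} (hxy : dist x y ≤ δ) :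
    inducedStrat Sg x ≤ inducedStrat Sg' y + 2 * δ := by
  have hfin : EMetric.hausdorffEdist Sg' Sg ≠ ⊤ := by
    rw [show EMetric.hausdorffEdist Sg' Sg = EMetric.hausdorffEdist Sg Sg' from EMetric.hausdorffEdist_comm]; exact hS.ne_top
  have hd : Metric.hausdorffDist Sg' Sg ≤ δ := by
    rw [Metric.hausdorffDist_comm]
    exact ENNReal.toReal_le_of_le_ofReal hδ.le hS.le
  have h1 : Metric.infDist x Sg ≤ Metric.infDist y Sg' + 2 * δ := by
    have ha := Metric.infDist_le_infDist_add_hausdorffDist (x := x) (s := Sg') (t := Sg) hfin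
    have h2 : Metric.infDist x Sg' ≤ Metric.infDist y Sg' + dist x y :=
      Metric.infDist_le_infDist_add_dist
    linarith
  unfold inducedStrat
  rcases le_total (Metric.infDist y Sg') 1 with hb | hb
  · calc min (Metric.infDist x Sg) 1 ≤ min (Metric.infDist y Sg' + 2*δ) 1 :=
        min_le_min (by linarith) le_rfl
      _ ≤ Metric.infDist y Sg' + 2*δ := min_le_left _ _
      _ = min (Metric.infDist y Sg') 1 + 2*δ := by rw [min_eq_left hb]
  · calc min (Metric.infDist x Sg) 1 ≤ 1 := min_le_right _ _
      _ ≤ min (Metric.infDist y Sg') 1 + 2*δ := by rw [min_eq_right hb]; linarith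

/-- 2-Lipschitz continuity of the parameter-free persistent stratified homotopy type,
in concrete form: if `d_H(X,X') < δ` and `d_H(Σ,Σ') < δ` then the interval level sets of
the induced strong stratifications are mutually contained in closed `2δ`-thickenings of
the `2δ`-enlarged interval level sets of the other. -/
theorem persistent_stratified_two_lipschitz {N : ℕ}
    (X X' Sg Sg' : Set (EuclideanSpace ℝ (Fin N)))
    (hSgX : Sg ⊆ X) (hSgX' : Sg' ⊆ X')
    (hSg : Sg.Nonempty) (hSg' : Sg'.Nonempty)
    (δ : ℝ) (hδ : 0 < δ)
    (hX : EMetric.hausdorffEdist X X' < ENNReal.ofReal δ)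
    (hS : EMetric.hausdorffEdist Sg Sg' < ENNReal.ofReal δ)
    (v' v : ℝ) (h0 : 0 ≤ v') (hvv : v' ≤ v) (hv1 : v ≤ 1) :
    {y | y ∈ X' ∧ v' ≤ inducedStrat Sg' y ∧ inducedStrat Sg' y ≤ v} ⊆
      {z | ∃ x ∈ {x | x ∈ X ∧ v' - 2 * δ ≤ inducedStrat Sg x ∧
        inducedStrat Sg x ≤ v + 2 * δ}, ‖x - z‖ ≤ 2 * δ} ∧
    {x | x ∈ X ∧ v' ≤ inducedStrat Sg x ∧ inducedStrat Sg x ≤ v} ⊆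
      {z | ∃ y ∈ {y | y ∈ X' ∧ v' - 2 * δ ≤ inducedStrat Sg' y ∧
        inducedStrat Sg' y ≤ v + 2 * δ}, ‖y - z‖ ≤ 2 * δ} := by
  have hS' : EMetric.hausdorffEdist Sg' Sg < ENNReal.ofReal δ := by
    rwa [show EMetric.hausdorffEdist Sg' Sg = EMetric.hausdorffEdist Sg Sg' from EMetric.hausdorffEdist_comm]
  have hX' : EMetric.hausdorffEdist X' X < ENNReal.ofReal δ := by
    rwa [show EMetric.hausdorffEdist X' X = EMetric.hausdorffEdist X X' from EMetric.hausdorffEdist_comm]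
  constructor
  · rintro y ⟨hyX', hy1, hy2⟩
    obtain ⟨x, hxX, hdx⟩ := EMetric.exists_edist_lt_of_hausdorffEdist_lt hyX' hX'
    have hdx' : dist x y ≤ δ := by
      rw [dist_comm]; exact (edist_lt_ofReal.mp hdx).le
    have hub : inducedStrat Sg x ≤ inducedStrat Sg' y + 2 * δ := strat_close hδ hS hdx'
    have hlb : inducedStrat Sg' y ≤ inducedStrat Sg x + 2 * δ :=
      strat_close hδ hS' (by rw [dist_comm]; exact hdx')
    exact ⟨x, ⟨hxX, by linarith, by linarith⟩, by
      rw [← dist_eq_norm]; linarith⟩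
  · rintro x ⟨hxX, hx1, hx2⟩
    obtain ⟨y, hyX', hdy⟩ := EMetric.exists_edist_lt_of_hausdorffEdist_lt hxX hX
    have hdy' : dist y x ≤ δ := by
      rw [dist_comm]; exact (edist_lt_ofReal.mp hdy).le
    have hub : inducedStrat Sg' y ≤ inducedStrat Sg x + 2 * δ := strat_close hδ hS' hdy'
    have hlb : inducedStrat Sg x ≤ inducedStrat Sg' y + 2 * δ :=
      strat_close hδ hS (by rw [dist_comm]; exact hdy')
    exact ⟨y, ⟨hyX', by linarith, by linarith⟩, by
      rw [← dist_eq_norm]; linarith⟩
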